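/- arXiv:1303.3857 — 2 statements merged into one kernel-verified Lean document; each statement's English description precedes it below -/
import Mathlib

section
/- Every permutation (of any [n]) that has no key mid-123 entry has no mid-123 entry at all; that is, it avoids the pattern 123. Equivalently, every permutation containing a 123 pattern has a key mid-123 entry. -/
/-- `π` contains the pattern 123: indices `i < j < k` with `π i < π j < π k`. -/
def Contains123 {n : ℕ} (π : Equiv.Perm (Fin n)) : Prop :=
  ∃ i j k : Fin n, i < j ∧ j < k ∧ π i < π j ∧ π j < π k

/-- `π j` is a mid-123 entry: it serves as the "2" of a 123 pattern. -/
def IsMid123 {n : ℕ} (π : Equiv.Perm (Fin n)) (j : Fin n) : Prop :=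
  ∃ i k : Fin n, i < j ∧ j < k ∧ π i < π j ∧ π j < π k

/-- `π m` is a right-to-left maximum: it exceeds every entry to its right. -/
def IsRLMax {n : ℕ} (π : Equiv.Perm (Fin n)) (m : Fin n) : Prop :=
  ∀ m' : Fin n, m < m' → π m' < π m

/-- `π j` is a key mid-123 entry: a mid-123 entry whose immediate predecessor either is
smaller than `π j` or is a right-to-left maximum. -/
def IsKeyMid123 {n : ℕ} (π : Equiv.Perm (Fin n)) (j : Fin n) : Prop :=
  IsMid123 π j ∧ ∃ j' : Fin n, (j' : ℕ) + 1 = (j : ℕ) ∧ (π j' < π j ∨ IsRLMax π j')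

theorem stmt2 {n : ℕ} (π : Equiv.Perm (Fin n))
    (h : ∀ j : Fin n, ¬ IsKeyMid123 π j) : ¬ Contains123 π := by
  classical
  rintro ⟨i, j, k, hij, hjk, h1, h2⟩
  -- the set of mid-123 indices is nonempty
  have hmem : j ∈ Finset.univ.filter (fun m => IsMid123 π m) := by
    simp only [Finset.mem_filter, Finset.mem_univ, true_and]
    exact ⟨i, k, hij, hjk, h1, h2⟩
  set S := Finset.univ.filter (fun m => IsMid123 π m) with hS
  have hne : S.Nonempty := ⟨j, hmem⟩
  set j0 := S.min' hne with hj0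
  have hj0mid : IsMid123 π j0 := by
    have := S.min'_mem hne
    simp only [hS, Finset.mem_filter] at this
    exact this.2
  obtain ⟨i0, k0, hi0, hk0, hp1, hp2⟩ := hj0mid
  have hpos : 0 < (j0 : ℕ) := lt_of_le_of_lt (Nat.zero_le _) hi0
  have hlt : (j0 : ℕ) - 1 < n := lt_of_le_of_lt (Nat.sub_le _ _) j0.isLt
  set j' : Fin n := ⟨(j0 : ℕ) - 1, hlt⟩ with hj'
  have hsucc : (j' : ℕ) + 1 = (j0 : ℕ) := Nat.succ_pred_eq_of_pos hpos
  have hj'lt : j' < j0 := by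
    simp only [Fin.lt_def]; omega
  have hkey := h j0
  rw [IsKeyMid123] at hkey
  push_neg at hkey
  have hmid0 : IsMid123 π j0 := ⟨i0, k0, hi0, hk0, hp1, hp2⟩
  have hnot := hkey hmid0 j' hsucc
  obtain ⟨hge, hnotrl⟩ := hnot
  -- π j' > π j0
  have hne' : π j' ≠ π j0 := fun he => (ne_of_lt hj'lt) (π.injective he)
  have hgt : π j0 < π j' := lt_of_le_of_ne hge (Ne.symm hne')
  -- j' is not an RL max: get m' > j' with π m' > π j'
  rw [IsRLMax] at hnotrl
  push_neg at hnotrl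
  obtain ⟨m', hm', hm'ge⟩ := hnotrl
  have hm'ne : π j' ≠ π m' := fun he => (ne_of_lt hm') (π.injective he)
  have hm'gt : π j' < π m' := lt_of_le_of_ne hm'ge hm'ne
  -- i0 < j'
  have hi0j' : i0 < j' := by
    have hne2 : i0 ≠ j' := by
      intro he
      rw [he] at hp1
      exact absurd (hp1.trans hgt) (lt_irrefl _)
    have : (i0 : ℕ) < (j0 : ℕ) := hi0
    have : (i0 : ℕ) ≤ (j' : ℕ) := by omega
    exact lt_of_le_of_ne (Fin.le_def.mpr this) hne2
  -- so j' is a mid-123 entry, contradicting minimality of j0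
  have hmid' : IsMid123 π j' := ⟨i0, m', hi0j', hm', hp1.trans hgt, hm'gt⟩
  have : j' ∈ S := by
    simp only [hS, Finset.mem_filter, Finset.mem_univ, true_and]
    exact hmid'
  exact absurd (S.min'_le _ this) (not_le.mpr hj'lt)
end

section
/- Let π be a permutation of [n] avoiding both of the patterns 1243 and 2134, and suppose π(j) is the last mid-123 entry of π, i.e., π(j) is a mid-123 entry and π(j') is not a mid-123 entry for any j' > j. Then there is exactly one index l > j with π(l) > π(j); that is, the entry c such that (π(j), c) forms the '23' of a 123 pattern is unique. -/
/-- `π` contains the pattern 1243: indices `i < j < k < l` with `π i < π j < π l < π k`. -/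
def Contains1243 {n : ℕ} (π : Equiv.Perm (Fin n)) : Prop :=
  ∃ i j k l : Fin n, i < j ∧ j < k ∧ k < l ∧ π i < π j ∧ π j < π l ∧ π l < π k

/-- `π` contains the pattern 2134: indices `i < j < k < l` with `π j < π i < π k < π l`. -/
def Contains2134 {n : ℕ} (π : Equiv.Perm (Fin n)) : Prop :=
  ∃ i j k l : Fin n, i < j ∧ j < k ∧ k < l ∧ π j < π i ∧ π i < π k ∧ π k < π l

/-- `π` avoids both patterns 1243 and 2134. -/
def AvoidsBoth {n : ℕ} (π : Equiv.Perm (Fin n)) : Prop :=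
  ¬ Contains1243 π ∧ ¬ Contains2134 π

theorem stmt3 {n : ℕ} (π : Equiv.Perm (Fin n)) (j : Fin n)
    (havoid : AvoidsBoth π) (hmid : IsMid123 π j)
    (hlast : ∀ j' : Fin n, j < j' → ¬ IsMid123 π j') :
    ∃! l : Fin n, j < l ∧ π j < π l := by
  obtain ⟨i, k, hij, hjk, h1, h2⟩ := hmid
  refine ⟨k, ⟨hjk, h2⟩, ?_⟩
  rintro y ⟨hjy, hpy⟩
  by_contra hne
  rcases lt_trichotomy y k with h | h | h
  · rcases lt_trichotomy (π y) (π k) with hp | hp | hp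
    · exact hlast y hjy ⟨j, k, hjy, h, hpy, hp⟩
    · exact hne (π.injective hp)
    · exact havoid.1 ⟨i, j, y, k, hij, hjy, h, h1, h2, hp⟩
  · exact hne h
  · rcases lt_trichotomy (π k) (π y) with hp | hp | hp
    · exact hlast k hjk ⟨j, y, hjk, h, h2, hp⟩
    · exact hne (π.injective hp).symm
    · exact havoid.1 ⟨i, j, k, y, hij, hjk, h, h1, hpy, hp⟩
end
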